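/- The map A ↦ P_A(B), defined on L^∞_+(Ω) with values in L(H¹_⋄(Ω)), is Fréchet differentiable with derivative D_A P_A(B;C) = P_A(C) P_A(B); more precisely, ‖P_{A+C}(B) − P_A(B) − P_A(C)P_A(B)‖ ≤ ‖B‖‖C‖² / (c_A² (c_A − ‖C‖)) for ‖C‖ < c_A. -/

import Mathlib

/- Statement 5: the map `A ↦ P_A(B)` is Fréchet differentiable with derivative
`D_A P_A(B;C) = P_A(C)P_A(B)`; more precisely, the quantitative estimate
`‖P_{A+C}(B) − P_A(B) − P_A(C)P_A(B)‖ ≤ ‖B‖‖C‖²/(c_A²(c_A − ‖C‖))` holds for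
`‖C‖ < c_A`.  `H` stands for `H¹_⋄(Ω)`, `a` for the family of sesquilinear forms
`⟨·,·⟩_D = ∫_Ω (D∇·)·conj(∇·)`, and `coeffNorm μ` for the `L^∞` norm
`‖·‖ = ess sup ‖·(x)‖₂` of a matrix-valued coefficient. -/

open MeasureTheory Matrix

noncomputable section

def specNorm {d : ℕ} (M : Matrix (Fin d) (Fin d) ℂ) : ℝ :=
  ‖(Matrix.toEuclideanCLM (𝕜 := ℂ) M :
      EuclideanSpace ℂ (Fin d) →L[ℂ] EuclideanSpace ℂ (Fin d))‖

def coeffNorm {d : ℕ} (μ : Measure (EuclideanSpace ℝ (Fin d)))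
    (B : EuclideanSpace ℝ (Fin d) → Matrix (Fin d) (Fin d) ℂ) : ℝ :=
  essSup (fun x => specNorm (B x)) μ

private lemma divAux {cA K w : ℝ} (hcA : 0 < cA) (hK : 0 ≤ K) (hw : 0 ≤ w)
    (h : cA * w ^ 2 ≤ K * w) : w ≤ K / cA := by
  rcases eq_or_lt_of_le hw with h0 | h0
  · rw [← h0]; positivity
  · rw [le_div_iff₀ hcA]; nlinarith

set_option maxHeartbeats 1600000 in
theorem stmt5 {d : ℕ} (μ : Measure (EuclideanSpace ℝ (Fin d)))
    {H : Type*} [NormedAddCommGroup H] [InnerProductSpace ℂ H] [CompleteSpace H]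
    (a : (EuclideanSpace ℝ (Fin d) → Matrix (Fin d) (Fin d) ℂ) → H → H → ℂ)
    (A B C : EuclideanSpace ℝ (Fin d) → Matrix (Fin d) (Fin d) ℂ) (cA : ℝ)
    (hsub1 : ∀ D (w w' v : H), a D (w - w') v = a D w v - a D w' v)
    (hcoefadd : ∀ w v, a (A + C) w v = a A w v + a C w v)
    -- continuity of the forms with the `L^∞` constants
    (hBbdd : ∀ w v, ‖a B w v‖ ≤ coeffNorm μ B * ‖w‖ * ‖v‖)
    (hCbdd : ∀ w v, ‖a C w v‖ ≤ coeffNorm μ C * ‖w‖ * ‖v‖)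
    -- coercivity of `A` and (hence) of `A + C`
    (hcA : 0 < cA)
    (hAcoer : ∀ v : H, cA * ‖v‖ ^ 2 ≤ (a A v v).re)
    (hApCcoer : ∀ v : H, (cA - coeffNorm μ C) * ‖v‖ ^ 2 ≤ (a (A + C) v v).re)
    -- `‖C‖ < c_A`
    (hC : coeffNorm μ C < cA)
    -- the operators and their standard norm bounds `‖P_A(B)‖ ≤ ‖B‖/c_A` etc.
    (PAB PApCB PAC : H →L[ℂ] H)
    (hPAB : ∀ y v, a A (PAB y) v = -a B y v)
    (hPApCB : ∀ y v, a (A + C) (PApCB y) v = -a B y v)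
    (hPAC : ∀ y v, a A (PAC y) v = -a C y v)
    (hPABle : ‖PAB‖ ≤ coeffNorm μ B / cA)
    (hPACle : ‖PAC‖ ≤ coeffNorm μ C / cA)
    (hPApCBle : ‖PApCB‖ ≤ coeffNorm μ B / (cA - coeffNorm μ C)) :
    ‖PApCB - PAB - PAC.comp PAB‖ ≤
      coeffNorm μ B * coeffNorm μ C ^ 2 / (cA ^ 2 * (cA - coeffNorm μ C)) := by
  set b := coeffNorm μ B with hbdef
  set c := coeffNorm μ C with hcdef
  have hcAc : 0 < cA - c := by linarith
  have hb : 0 ≤ b := by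
    have h := (norm_nonneg PAB).trans hPABle
    by_contra h'; push_neg at h'
    have : b / cA < 0 := div_neg_of_neg_of_pos h' hcA
    linarith
  have hc : 0 ≤ c := by
    have h := (norm_nonneg PAC).trans hPACle
    by_contra h'; push_neg at h'
    have : c / cA < 0 := div_neg_of_neg_of_pos h' hcA
    linarith
  -- key identity 1: a A ((PApCB - PAB) y) v = - a C (PApCB y) v
  have key1 : ∀ y v : H, a A (PApCB y - PAB y) v = -a C (PApCB y) v := by
    intro y v
    have h1 : a A (PApCB y) v = -a B y v - a C (PApCB y) v := by
      linear_combination hPApCB y v - hcoefadd (PApCB y) v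
    rw [hsub1, h1, hPAB]; ring
  -- estimate 1 : ‖(PApCB - PAB) y‖ ≤ c / cA * ‖PApCB y‖
  have est1 : ∀ y : H, ‖PApCB y - PAB y‖ ≤ c * ‖PApCB y‖ / cA := by
    intro y
    set w := PApCB y - PAB y with hw
    refine divAux hcA (mul_nonneg hc (norm_nonneg _)) (norm_nonneg _) ?_
    have h1 := hAcoer w
    have h2 : (a A w w).re ≤ ‖a A w w‖ := by
      exact Complex.re_le_norm _
    have h3 : ‖a A w w‖ = ‖a C (PApCB y) w‖ := by rw [key1 y w, norm_neg]
    have h4 := hCbdd (PApCB y) w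
    calc cA * ‖w‖ ^ 2 ≤ (a A w w).re := h1
      _ ≤ ‖a A w w‖ := h2
      _ = ‖a C (PApCB y) w‖ := h3
      _ ≤ c * ‖PApCB y‖ * ‖w‖ := h4
  -- key identity 2
  have key2 : ∀ y v : H, a A ((PApCB y - PAB y) - PAC (PAB y)) v
      = -a C (PApCB y - PAB y) v := by
    intro y v
    rw [hsub1, key1, hPAC, hsub1]
    ring
  -- estimate 2
  have est2 : ∀ y : H, ‖(PApCB y - PAB y) - PAC (PAB y)‖
      ≤ c * ‖PApCB y - PAB y‖ / cA := by
    intro y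
    set w := (PApCB y - PAB y) - PAC (PAB y) with hw
    refine divAux hcA (mul_nonneg hc (norm_nonneg _)) (norm_nonneg _) ?_
    have h1 := hAcoer w
    have h2 : (a A w w).re ≤ ‖a A w w‖ := by
      exact Complex.re_le_norm _
    have h3 : ‖a A w w‖ = ‖a C (PApCB y - PAB y) w‖ := by rw [key2 y w, norm_neg]
    have h4 := hCbdd (PApCB y - PAB y) w
    calc cA * ‖w‖ ^ 2 ≤ (a A w w).re := h1
      _ ≤ ‖a A w w‖ := h2
      _ = ‖a C (PApCB y - PAB y) w‖ := h3
      _ ≤ c * ‖PApCB y - PAB y‖ * ‖w‖ := h4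
  refine ContinuousLinearMap.opNorm_le_bound _
    (div_nonneg (mul_nonneg hb (pow_nonneg hc 2)) (mul_nonneg (by positivity) hcAc.le)) fun y => ?_
  have happ : (PApCB - PAB - PAC.comp PAB) y = (PApCB y - PAB y) - PAC (PAB y) := by
    simp [ContinuousLinearMap.sub_apply, ContinuousLinearMap.comp_apply]
  rw [happ]
  have hPy : ‖PApCB y‖ ≤ b / (cA - c) * ‖y‖ :=
    (PApCB.le_opNorm y).trans (mul_le_mul_of_nonneg_right hPApCBle (norm_nonneg _))
  have h1 := est1 y
  have h2 := est2 y
  have hny : 0 ≤ ‖y‖ := norm_nonneg y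
  have hchain : ‖(PApCB y - PAB y) - PAC (PAB y)‖
      ≤ c / cA * (c / cA * (b / (cA - c) * ‖y‖)) := by
    calc ‖(PApCB y - PAB y) - PAC (PAB y)‖ ≤ c * ‖PApCB y - PAB y‖ / cA := h2
      _ = c / cA * ‖PApCB y - PAB y‖ := by ring
      _ ≤ c / cA * (c * ‖PApCB y‖ / cA) := by
          exact mul_le_mul_of_nonneg_left h1 (div_nonneg hc hcA.le)
      _ = c / cA * (c / cA * ‖PApCB y‖) := by ring
      _ ≤ c / cA * (c / cA * (b / (cA - c) * ‖y‖)) := by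
          refine mul_le_mul_of_nonneg_left (mul_le_mul_of_nonneg_left hPy ?_) ?_ <;>
            exact div_nonneg hc hcA.le
  refine hchain.trans (le_of_eq ?_)
  field_simp

end
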